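/- Let p, q, a ∈ ℂⁿ, let b ∈ ℂ, fix β ∈ {1,…,n}, and for each j ∈ {1,…,n} define the functions P_j, S_j and the functions Q, R on U(n) by P_j(z) = Σ_k p_k·a_j·z_{kj}, Q(z) = Σ_k q_k·b·z_{kβ}, R(z) = Σ_k p_k·b·z_{kβ}, S_j(z) = Σ_k q_k·a_j·z_{kj}. Then all of these functions are eigenfunctions of τ with eigenvalue −n, and for all j, k the following identities of functions on U(n) hold: κ(P_j,P_k) = −P_j·P_k, κ(S_j,S_k) = −S_j·S_k, κ(Q,Q) = −Q², κ(R,R) = −R², κ(Q,R) = −Q·R, κ(Q,S_j) = −Q·S_j, κ(P_j,R) = −P_j·R, κ(P_j,S_k) = −P_k·S_j, κ(P_j,Q) = −R·S_j, κ(R,S_j) = −P_j·Q. (Thus the conditions (PP-QQ) of the paper's general scheme hold on the unitary group with μ = −1.) -/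

import Mathlib

/-- The matrix `E_rs` with `(r,s)`-entry `1` and all other entries `0`. -/
noncomputable def EE (n : ℕ) (r s : Fin n) : Matrix (Fin n) (Fin n) ℂ :=
  Matrix.single r s 1

/-- `X_rs = (E_rs + E_sr)/√2`. -/
noncomputable def XX (n : ℕ) (r s : Fin n) : Matrix (Fin n) (Fin n) ℂ :=
  (Real.sqrt 2 : ℂ)⁻¹ • (EE n r s + EE n s r)

/-- `Y_rs = (E_rs - E_sr)/√2`. -/
noncomputable def YY (n : ℕ) (r s : Fin n) : Matrix (Fin n) (Fin n) ℂ :=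
  (Real.sqrt 2 : ℂ)⁻¹ • (EE n r s - EE n s r)

/-- `D_r = E_rr`. -/
noncomputable def DD (n : ℕ) (r : Fin n) : Matrix (Fin n) (Fin n) ℂ :=
  Matrix.single r r 1

/-- The Laplace–Beltrami operator `τ(F)(z) = Σ_{Z ∈ B} F(z·Z·Z)` of the bi-invariant
metric on `U(n)`, where `B = {iX_rs, Y_rs (r<s), iD_r}` is the canonical orthonormal
basis of `u(n)`. -/
noncomputable def tauU (n : ℕ) (F : Matrix (Fin n) (Fin n) ℂ → ℂ)
    (z : Matrix (Fin n) (Fin n) ℂ) : ℂ :=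
  (∑ r : Fin n, ∑ s : Fin n, if r < s then
      F (z * (Complex.I • XX n r s) * (Complex.I • XX n r s))
        + F (z * YY n r s * YY n r s)
    else 0)
  + ∑ r : Fin n, F (z * (Complex.I • DD n r) * (Complex.I • DD n r))

/-- The conformality operator `κ(F,G)(z) = Σ_{Z ∈ B} F(z·Z)·G(z·Z)` on `U(n)`. -/
noncomputable def kappaU (n : ℕ) (F G : Matrix (Fin n) (Fin n) ℂ → ℂ)
    (z : Matrix (Fin n) (Fin n) ℂ) : ℂ :=
  (∑ r : Fin n, ∑ s : Fin n, if r < s then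
      F (z * (Complex.I • XX n r s)) * G (z * (Complex.I • XX n r s))
        + F (z * YY n r s) * G (z * YY n r s)
    else 0)
  + ∑ r : Fin n, F (z * (Complex.I • DD n r)) * G (z * (Complex.I • DD n r))

/- ### Auxiliary lemmas -/

lemma hc2 : ((Real.sqrt 2 : ℂ))⁻¹ * ((Real.sqrt 2 : ℂ))⁻¹ = 2⁻¹ := by
  rw [← mul_inv, ← Complex.ofReal_mul, Real.mul_self_sqrt (by norm_num)]
  norm_num

lemma evalE {n : ℕ} (u : Fin n → ℂ) (z : Matrix (Fin n) (Fin n) ℂ) (r s j : Fin n) :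
    (∑ k : Fin n, u k * (z * EE n r s) k j) = if s = j then ∑ k : Fin n, u k * z k r else 0 := by
  by_cases h : s = j
  · subst h; simp [EE]
  · simp [EE, fun k => Matrix.mul_single_apply_of_ne (c := (1:ℂ)) r s k j (Ne.symm h) z, h]

lemma evalX {n : ℕ} (u : Fin n → ℂ) (z : Matrix (Fin n) (Fin n) ℂ) (r s j : Fin n) :
    (∑ k : Fin n, u k * (z * (Complex.I • XX n r s)) k j)
      = Complex.I * (Real.sqrt 2 : ℂ)⁻¹ *
        ((if s = j then ∑ k : Fin n, u k * z k r else 0)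
          + (if r = j then ∑ k : Fin n, u k * z k s else 0)) := by
  have step : (∑ k : Fin n, u k * (z * (Complex.I • XX n r s)) k j)
      = Complex.I * (Real.sqrt 2 : ℂ)⁻¹ *
        ((∑ k : Fin n, u k * (z * EE n r s) k j) + ∑ k : Fin n, u k * (z * EE n s r) k j) := by
    rw [XX, Matrix.mul_smul, Matrix.mul_smul, Matrix.mul_add, mul_add, Finset.mul_sum,
      Finset.mul_sum, ← Finset.sum_add_distrib]
    refine Finset.sum_congr rfl fun k _ => ?_
    simp only [Matrix.smul_apply, Matrix.add_apply, smul_eq_mul]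
    ring
  rw [step, evalE, evalE]

lemma evalY {n : ℕ} (u : Fin n → ℂ) (z : Matrix (Fin n) (Fin n) ℂ) (r s j : Fin n) :
    (∑ k : Fin n, u k * (z * YY n r s) k j)
      = (Real.sqrt 2 : ℂ)⁻¹ *
        ((if s = j then ∑ k : Fin n, u k * z k r else 0)
          - (if r = j then ∑ k : Fin n, u k * z k s else 0)) := by
  have step : (∑ k : Fin n, u k * (z * YY n r s) k j)
      = (Real.sqrt 2 : ℂ)⁻¹ *
        ((∑ k : Fin n, u k * (z * EE n r s) k j) - ∑ k : Fin n, u k * (z * EE n s r) k j) := by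
    rw [YY, Matrix.mul_smul, Matrix.mul_sub, mul_sub, Finset.mul_sum,
      Finset.mul_sum, ← Finset.sum_sub_distrib]
    refine Finset.sum_congr rfl fun k _ => ?_
    simp only [Matrix.smul_apply, Matrix.sub_apply, smul_eq_mul]
    ring
  rw [step, evalE, evalE]

lemma evalD {n : ℕ} (u : Fin n → ℂ) (z : Matrix (Fin n) (Fin n) ℂ) (r j : Fin n) :
    (∑ k : Fin n, u k * (z * (Complex.I • DD n r)) k j)
      = Complex.I * (if r = j then ∑ k : Fin n, u k * z k r else 0) := by
  have step : (∑ k : Fin n, u k * (z * (Complex.I • DD n r)) k j)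
      = Complex.I * ∑ k : Fin n, u k * (z * EE n r r) k j := by
    rw [show DD n r = EE n r r from rfl, Matrix.mul_smul, Finset.mul_sum]
    refine Finset.sum_congr rfl fun k _ => ?_
    simp only [Matrix.smul_apply, smul_eq_mul]
    ring
  rw [step, evalE]

lemma evalSmul {n : ℕ} (u : Fin n → ℂ) (z M : Matrix (Fin n) (Fin n) ℂ) (d : ℂ) (j : Fin n) :
    (∑ k : Fin n, u k * (z * (d • M)) k j) = d * ∑ k : Fin n, u k * (z * M) k j := by
  rw [Matrix.mul_smul, Finset.mul_sum]
  refine Finset.sum_congr rfl fun k _ => ?_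
  simp only [Matrix.smul_apply, smul_eq_mul]
  ring

lemma evalEadd {n : ℕ} (u : Fin n → ℂ) (z : Matrix (Fin n) (Fin n) ℂ) (r s j : Fin n) :
    (∑ k : Fin n, u k * (z * (EE n r r + EE n s s)) k j)
      = (if r = j then ∑ k : Fin n, u k * z k r else 0)
        + (if s = j then ∑ k : Fin n, u k * z k s else 0) := by
  rw [← evalE u z r r j, ← evalE u z s s j, ← Finset.sum_add_distrib]
  refine Finset.sum_congr rfl fun k _ => ?_
  rw [Matrix.mul_add, Matrix.add_apply]
  ring

lemma sum_lt_symm {n : ℕ} (f : Fin n → Fin n → ℂ) (hf : ∀ r s, f r s = f s r) :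
    (∑ r : Fin n, ∑ s : Fin n, if r < s then f r s else 0)
      = ((∑ r : Fin n, ∑ s : Fin n, f r s) - ∑ r : Fin n, f r r) / 2 := by
  have hswap : (∑ r : Fin n, ∑ s : Fin n, if r < s then f r s else 0)
      = ∑ r : Fin n, ∑ s : Fin n, if s < r then f r s else 0 := by
    rw [Finset.sum_comm]
    exact Finset.sum_congr rfl fun r _ => Finset.sum_congr rfl fun s _ => by rw [hf]
  have h2 : (∑ r : Fin n, ∑ s : Fin n, if r < s then f r s else 0)
      + (∑ r : Fin n, ∑ s : Fin n, if r < s then f r s else 0)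
      = (∑ r : Fin n, ∑ s : Fin n, f r s) - ∑ r : Fin n, f r r := by
    nth_rewrite 2 [hswap]
    rw [← Finset.sum_add_distrib]
    have hrow : ∀ r : Fin n, ((∑ s : Fin n, if r < s then f r s else 0)
        + ∑ s : Fin n, if s < r then f r s else 0) = (∑ s : Fin n, f r s) - f r r := by
      intro r
      rw [← Finset.sum_add_distrib]
      have : ∀ s : Fin n, ((if r < s then f r s else 0) + if s < r then f r s else 0)
          = f r s - (if r = s then f r s else 0) := by
        intro s
        rcases lt_trichotomy r s with h | h | h
        · simp [h, not_lt_of_gt h, ne_of_lt h]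
        · simp [h]
        · simp [h, not_lt_of_gt h, (ne_of_lt h).symm]
      rw [Finset.sum_congr rfl fun s _ => this s, Finset.sum_sub_distrib, Finset.sum_ite_eq]
      simp
    rw [Finset.sum_congr rfl fun r _ => hrow r, Finset.sum_sub_distrib]
  linear_combination h2 / 2

lemma sqX {n : ℕ} {r s : Fin n} (h : r ≠ s) :
    (Complex.I • XX n r s) * (Complex.I • XX n r s)
      = (-(2⁻¹ : ℂ)) • (EE n r r + EE n s s) := by
  rw [XX, smul_smul, smul_mul_smul_comm]
  have hE : (EE n r s + EE n s r) * (EE n r s + EE n s r) = EE n r r + EE n s s := by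
    simp only [EE, add_mul, mul_add, Matrix.single_mul_single_same,
      Matrix.single_mul_single_of_ne (c := (1:ℂ)) r s r h.symm (1:ℂ),
      Matrix.single_mul_single_of_ne (c := (1:ℂ)) s r s h (1:ℂ), mul_one]
    abel
  rw [hE]
  congr 1
  linear_combination (((Real.sqrt 2 : ℂ))⁻¹ * ((Real.sqrt 2 : ℂ))⁻¹) * Complex.I_mul_I - hc2

lemma sqY {n : ℕ} {r s : Fin n} (h : r ≠ s) :
    YY n r s * YY n r s = (-(2⁻¹ : ℂ)) • (EE n r r + EE n s s) := by
  rw [YY, smul_mul_smul_comm]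
  have hE : (EE n r s - EE n s r) * (EE n r s - EE n s r) = -(EE n r r + EE n s s) := by
    simp only [EE, sub_mul, mul_sub, Matrix.single_mul_single_same,
      Matrix.single_mul_single_of_ne (c := (1:ℂ)) r s r h.symm (1:ℂ),
      Matrix.single_mul_single_of_ne (c := (1:ℂ)) s r s h (1:ℂ), mul_one]
    abel
  rw [hE, smul_neg, ← neg_smul, hc2]

lemma sqD {n : ℕ} (r : Fin n) :
    (Complex.I • DD n r) * (Complex.I • DD n r) = (-1 : ℂ) • EE n r r := by
  rw [smul_mul_smul_comm, Complex.I_mul_I]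
  congr 1
  simp [DD, EE]

lemma kappa_key {n : ℕ} (u v : Fin n → ℂ) (j l : Fin n) (z : Matrix (Fin n) (Fin n) ℂ) :
    kappaU n (fun z => ∑ k : Fin n, u k * z k j) (fun z => ∑ k : Fin n, v k * z k l) z
      = -((∑ k : Fin n, u k * z k l) * (∑ k : Fin n, v k * z k j)) := by
  set Fc : Fin n → ℂ := fun r => ∑ k : Fin n, u k * z k r with hFc
  set Gc : Fin n → ℂ := fun r => ∑ k : Fin n, v k * z k r with hGc
  have hI : Complex.I * Complex.I = -1 := Complex.I_mul_I
  have hpt : ∀ r s : Fin n,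
      ((∑ k : Fin n, u k * (z * (Complex.I • XX n r s)) k j)
          * (∑ k : Fin n, v k * (z * (Complex.I • XX n r s)) k l)
        + (∑ k : Fin n, u k * (z * YY n r s) k j)
          * (∑ k : Fin n, v k * (z * YY n r s) k l))
      = -((if s = j then Fc r else 0) * (if r = l then Gc s else 0)
          + (if r = j then Fc s else 0) * (if s = l then Gc r else 0)) := by
    intro r s
    rw [evalX u z r s j, evalX v z r s l, evalY u z r s j, evalY v z r s l]
    set A := (if s = j then Fc r else 0)
    set B := (if r = j then Fc s else 0)
    set C := (if s = l then Gc r else 0)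
    set D := (if r = l then Gc s else 0)
    set c := ((Real.sqrt 2 : ℂ))⁻¹
    linear_combination (c * c * (A + B) * (C + D)) * hI + (-2 * (A * D + B * C)) * hc2
  rw [kappaU]
  have hdiag : ∀ r : Fin n,
      (∑ k : Fin n, u k * (z * (Complex.I • DD n r)) k j)
        * (∑ k : Fin n, v k * (z * (Complex.I • DD n r)) k l)
      = -((if r = j then Fc r else 0) * (if r = l then Gc r else 0)) := by
    intro r
    rw [evalD u z r j, evalD v z r l]
    set A := (if r = j then Fc r else 0)
    set C := (if r = l then Gc r else 0)
    linear_combination (A * C) * hI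
  rw [Finset.sum_congr rfl fun r _ => hdiag r]
  have hin : (∑ r : Fin n, ∑ s : Fin n, if r < s then
      ((∑ k : Fin n, u k * (z * (Complex.I • XX n r s)) k j)
          * (∑ k : Fin n, v k * (z * (Complex.I • XX n r s)) k l)
        + (∑ k : Fin n, u k * (z * YY n r s) k j)
          * (∑ k : Fin n, v k * (z * YY n r s) k l)) else 0)
      = ∑ r : Fin n, ∑ s : Fin n, if r < s then
          (-((if s = j then Fc r else 0) * (if r = l then Gc s else 0)
            + (if r = j then Fc s else 0) * (if s = l then Gc r else 0))) else 0 :=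
    Finset.sum_congr rfl fun r _ => Finset.sum_congr rfl fun s _ => by rw [hpt r s]
  rw [hin, sum_lt_symm _ (fun r s => by ring)]
  by_cases hjl : j = l
  · subst hjl
    simp [ite_mul, mul_ite, Finset.sum_ite_eq, Finset.sum_ite_eq', Finset.sum_add_distrib]
    try ring
  · simp [ite_mul, mul_ite, Finset.sum_ite_eq, Finset.sum_ite_eq', Finset.sum_add_distrib,
      hjl, fun h : l = j => hjl h.symm]
    try ring

lemma tau_key {n : ℕ} (u : Fin n → ℂ) (j : Fin n) (z : Matrix (Fin n) (Fin n) ℂ) :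
    tauU n (fun z => ∑ k : Fin n, u k * z k j) z = -(n : ℂ) * ∑ k : Fin n, u k * z k j := by
  have hpt : ∀ r s : Fin n, r ≠ s →
      ((∑ k : Fin n, u k * (z * (Complex.I • XX n r s) * (Complex.I • XX n r s)) k j)
        + ∑ k : Fin n, u k * (z * YY n r s * YY n r s) k j)
      = -((if r = j then ∑ k : Fin n, u k * z k r else 0)
          + (if s = j then ∑ k : Fin n, u k * z k s else 0)) := by
    intro r s h
    rw [mul_assoc, mul_assoc, sqX h, sqY h, evalSmul, evalEadd]
    ring
  have hdiag : ∀ r : Fin n,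
      (∑ k : Fin n, u k * (z * (Complex.I • DD n r) * (Complex.I • DD n r)) k j)
      = -(if r = j then ∑ k : Fin n, u k * z k r else 0) := by
    intro r
    rw [mul_assoc, sqD, evalSmul, evalE]
    ring
  rw [tauU, Finset.sum_congr rfl fun r _ => hdiag r]
  have hin : (∑ r : Fin n, ∑ s : Fin n, if r < s then
      ((∑ k : Fin n, u k * (z * (Complex.I • XX n r s) * (Complex.I • XX n r s)) k j)
        + ∑ k : Fin n, u k * (z * YY n r s * YY n r s) k j) else 0)
      = ∑ r : Fin n, ∑ s : Fin n, if r < s then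
          (-((if r = j then ∑ k : Fin n, u k * z k r else 0)
            + (if s = j then ∑ k : Fin n, u k * z k s else 0))) else 0 :=
    Finset.sum_congr rfl fun r _ => Finset.sum_congr rfl fun s _ => by
      by_cases h : r < s
      · rw [if_pos h, if_pos h, hpt r s (ne_of_lt h)]
      · rw [if_neg h, if_neg h]
  rw [hin, sum_lt_symm _ (fun r s => by ring)]
  simp [Finset.sum_add_distrib, Finset.sum_ite_eq, Finset.sum_ite_eq', Finset.sum_const,
    Fintype.card_fin]
  ring

lemma factor_sum {n : ℕ} (z : Matrix (Fin n) (Fin n) ℂ) (w : Fin n → ℂ) (c : ℂ) (col : Fin n) :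
    (∑ m : Fin n, w m * c * z m col) = c * ∑ m : Fin n, w m * z m col := by
  rw [Finset.mul_sum]
  exact Finset.sum_congr rfl fun m _ => by ring

/-- The functions `P_j(z) = Σ_k p_k a_j z_{kj}`, `Q(z) = Σ_k q_k b z_{kβ}`,
`R(z) = Σ_k p_k b z_{kβ}`, `S_j(z) = Σ_k q_k a_j z_{kj}` on `U(n)` are eigenfunctions
of `τ` with eigenvalue `-n` and satisfy the conditions (PP-QQ) with `μ = -1`. -/
theorem stmt_8 (n : ℕ) (hn : 0 < n) (p q a : Fin n → ℂ) (b : ℂ) (β : Fin n)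
    (P S : Fin n → Matrix (Fin n) (Fin n) ℂ → ℂ)
    (Q R : Matrix (Fin n) (Fin n) ℂ → ℂ)
    (hPdef : ∀ j, P j = fun z => ∑ k : Fin n, p k * a j * z k j)
    (hQdef : Q = fun z => ∑ k : Fin n, q k * b * z k β)
    (hRdef : R = fun z => ∑ k : Fin n, p k * b * z k β)
    (hSdef : ∀ j, S j = fun z => ∑ k : Fin n, q k * a j * z k j) :
    ∀ z ∈ Matrix.unitaryGroup (Fin n) ℂ,
      (∀ j : Fin n, tauU n (P j) z = -(n : ℂ) * P j z) ∧
      tauU n Q z = -(n : ℂ) * Q z ∧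
      tauU n R z = -(n : ℂ) * R z ∧
      (∀ j : Fin n, tauU n (S j) z = -(n : ℂ) * S j z) ∧
      (∀ j k : Fin n, kappaU n (P j) (P k) z = -(P j z * P k z)) ∧
      (∀ j k : Fin n, kappaU n (S j) (S k) z = -(S j z * S k z)) ∧
      kappaU n Q Q z = -(Q z * Q z) ∧
      kappaU n R R z = -(R z * R z) ∧
      kappaU n Q R z = -(Q z * R z) ∧
      (∀ j : Fin n, kappaU n Q (S j) z = -(Q z * S j z)) ∧
      (∀ j : Fin n, kappaU n (P j) R z = -(P j z * R z)) ∧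
      (∀ j k : Fin n, kappaU n (P j) (S k) z = -(P k z * S j z)) ∧
      (∀ j : Fin n, kappaU n (P j) Q z = -(R z * S j z)) ∧
      (∀ j : Fin n, kappaU n R (S j) z = -(P j z * Q z)) := by
  intro z _
  refine ⟨?_, ?_, ?_, ?_, ?_, ?_, ?_, ?_, ?_, ?_, ?_, ?_, ?_, ?_⟩
  · intro j; rw [hPdef j]; exact tau_key _ _ _
  · rw [hQdef]; exact tau_key _ _ _
  · rw [hRdef]; exact tau_key _ _ _
  · intro j; rw [hSdef j]; exact tau_key _ _ _
  · intro j k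
    rw [hPdef j, hPdef k, kappa_key]; simp only [factor_sum]; try ring
  · intro j k
    rw [hSdef j, hSdef k, kappa_key]; simp only [factor_sum]; try ring
  · rw [hQdef, kappa_key]
  · rw [hRdef, kappa_key]
  · rw [hQdef, hRdef, kappa_key]
  · intro j
    rw [hQdef, hSdef j, kappa_key]; simp only [factor_sum]; try ring
  · intro j
    rw [hPdef j, hRdef, kappa_key]; simp only [factor_sum]; try ring
  · intro j k
    rw [hPdef j, hPdef k, hSdef j, hSdef k, kappa_key]; simp only [factor_sum]; try ring
  · intro j
    rw [hPdef j, hQdef, hRdef, hSdef j, kappa_key]; simp only [factor_sum]; try ring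
  · intro j
    rw [hPdef j, hQdef, hRdef, hSdef j, kappa_key]; simp only [factor_sum]; try ring
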